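/- For m ≥ 2 and 1/m < β < β' < 1, the quasi-greedy β'-expansion of 1 with digit set {0,…,m−1} is strictly smaller in the lexicographical order than the quasi-greedy β-expansion of 1; i.e., the map β ↦ (δ_ℓ(β)) is strictly decreasing. -/

import Mathlib

/-- Strict lexicographic order on sequences. -/
def LexLt (a b : ℕ → ℕ) : Prop := ∃ n, (∀ m < n, a m = b m) ∧ a n < b n

/-- Non-strict lexicographic order on sequences. -/
def LexLe (a b : ℕ → ℕ) : Prop := a = b ∨ LexLt a b

/-- (d_ℓ) (0-indexed) is a β-expansion of 1 with digit set {0,…,m−1}. -/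
def IsExpansionOf1 (m : ℕ) (β : ℝ) (d : ℕ → ℕ) : Prop :=
  (∀ n, d n < m) ∧ (∑' n, (d n : ℝ) * β ^ (n + 1)) = 1

/-- Infinitely many nonzero digits. -/
def IsInfiniteExp (d : ℕ → ℕ) : Prop := ∀ n, ∃ k ≥ n, d k ≠ 0

/-- The quasi-greedy β-expansion of 1: the lexicographically largest infinite
expansion of 1. -/
def IsQuasiGreedy (m : ℕ) (β : ℝ) (d : ℕ → ℕ) : Prop :=
  IsExpansionOf1 m β d ∧ IsInfiniteExp d ∧
    ∀ e, IsExpansionOf1 m β e → IsInfiniteExp e → LexLe e d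

open Finset Filter

lemma lexlt_asymm {a b : ℕ → ℕ} (h1 : LexLt a b) (h2 : LexLt b a) : False := by
  obtain ⟨n, hn, hlt⟩ := h1
  obtain ⟨k, hk, hlt'⟩ := h2
  rcases lt_trichotomy n k with h | h | h
  · have := hk n h; omega
  · subst h; omega
  · have := hn k h; omega

lemma lex_total (a b : ℕ → ℕ) : LexLt a b ∨ a = b ∨ LexLt b a := by
  classical
  by_cases h : a = b
  · exact Or.inr (Or.inl h)
  · have hne : ∃ n, a n ≠ b n := by
      by_contra hc; push_neg at hc; exact h (funext hc)
    have h1 : a (Nat.find hne) ≠ b (Nat.find hne) := Nat.find_spec hne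
    have h2 : ∀ m < Nat.find hne, a m = b m := fun m hm => by
      have := Nat.find_min hne hm; simpa using this
    rcases lt_or_gt_of_ne h1 with h3 | h3
    · exact Or.inl ⟨_, h2, h3⟩
    · exact Or.inr (Or.inr ⟨_, fun m hm => (h2 m hm).symm, h3⟩)

lemma summable_digits {m : ℕ} {β : ℝ} (h0 : 0 < β) (h1 : β < 1) (d : ℕ → ℕ)
    (hd : ∀ n, d n < m) : Summable (fun n => (d n : ℝ) * β ^ (n + 1)) := by
  have hg : Summable (fun n : ℕ => (m : ℝ) * β * β ^ n) :=
    (summable_geometric_of_lt_one h0.le h1).mul_left _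
  refine Summable.of_nonneg_of_le (fun n => by positivity) (fun n => ?_) hg
  have hdm : (d n : ℝ) ≤ m := le_of_lt (by exact_mod_cast hd n)
  calc (d n : ℝ) * β ^ (n + 1) ≤ m * β ^ (n + 1) :=
        mul_le_mul_of_nonneg_right hdm (by positivity)
    _ = m * β * β ^ n := by ring

lemma tail_le {m : ℕ} {β : ℝ} (h0 : 0 < β) (h1 : β < 1) (d : ℕ → ℕ)
    (hd : ∀ n, d n < m) (j : ℕ) :
    ∑' k : ℕ, (d (k + j) : ℝ) * β ^ (k + j + 1) ≤ ((m : ℝ) - 1) * β ^ (j + 1) / (1 - β) := by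
  have h1β : (0:ℝ) < 1 - β := by linarith
  have hsum : Summable (fun n => (d n : ℝ) * β ^ (n + 1)) := summable_digits h0 h1 d hd
  have hsh : Summable (fun k : ℕ => (d (k + j) : ℝ) * β ^ (k + j + 1)) := by
    have := (summable_nat_add_iff j).2 hsum
    simpa using this
  have hg : Summable (fun k : ℕ => ((m : ℝ) - 1) * β ^ (j + 1) * β ^ k) :=
    (summable_geometric_of_lt_one h0.le h1).mul_left _
  have hle : ∀ k : ℕ, (d (k + j) : ℝ) * β ^ (k + j + 1) ≤ ((m : ℝ) - 1) * β ^ (j + 1) * β ^ k := by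
    intro k
    have hdm : (d (k + j) : ℝ) ≤ (m : ℝ) - 1 := by
      have := hd (k + j); have : d (k + j) ≤ m - 1 := by omega
      have h2 : ((d (k+j) : ℕ) : ℝ) ≤ ((m - 1 : ℕ) : ℝ) := by exact_mod_cast this
      have h3 : ((m - 1 : ℕ) : ℝ) = (m : ℝ) - 1 := by
        have : 1 ≤ m := by omega
        push_cast [Nat.cast_sub this]; ring
      linarith [h2, h3.le]
    calc (d (k + j) : ℝ) * β ^ (k + j + 1) ≤ ((m : ℝ) - 1) * β ^ (k + j + 1) := by
          apply mul_le_mul_of_nonneg_right hdm (by positivity)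
      _ = ((m : ℝ) - 1) * β ^ (j + 1) * β ^ k := by ring
  calc ∑' k : ℕ, (d (k + j) : ℝ) * β ^ (k + j + 1)
      ≤ ∑' k : ℕ, ((m : ℝ) - 1) * β ^ (j + 1) * β ^ k := Summable.tsum_le_tsum hle hsh hg
    _ = ((m : ℝ) - 1) * β ^ (j + 1) * (1 - β)⁻¹ := by
        rw [tsum_mul_left, tsum_geometric_of_lt_one h0.le h1]
    _ = ((m : ℝ) - 1) * β ^ (j + 1) / (1 - β) := by ring

noncomputable def resid (m : ℕ) (β x : ℝ) : ℕ → ℝ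
  | 0 => x
  | k + 1 => resid m β x k -
      ((min (m - 1) (⌈resid m β x k / β ^ (k + 1)⌉₊ - 1) : ℕ) : ℝ) * β ^ (k + 1)

noncomputable def qdig (m : ℕ) (β x : ℝ) (k : ℕ) : ℕ :=
  min (m - 1) (⌈resid m β x k / β ^ (k + 1)⌉₊ - 1)

lemma resid_succ (m : ℕ) (β x : ℝ) (k : ℕ) :
    resid m β x (k + 1) = resid m β x k - (qdig m β x k : ℝ) * β ^ (k + 1) := rfl


lemma exists_expansion (m : ℕ) (hm : 2 ≤ m) {β : ℝ} (h0 : 0 < β) (h1 : β < 1)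
    (hmβ : 1 < (m : ℝ) * β) {x : ℝ} (hx : 0 < x) (hx2 : x ≤ ((m : ℝ) - 1) * β / (1 - β)) :
    ∃ f : ℕ → ℕ, (∀ n, f n < m) ∧ (∑' n, (f n : ℝ) * β ^ (n + 1)) = x ∧ IsInfiniteExp f := by
  have h1β : (0:ℝ) < 1 - β := by linarith
  have hm1 : ((m - 1 : ℕ) : ℝ) = (m : ℝ) - 1 := by
    have : 1 ≤ m := by omega
    push_cast [Nat.cast_sub this]; ring
  -- invariant
  have inv : ∀ k, 0 < resid m β x k ∧ resid m β x k ≤ ((m : ℝ) - 1) * β ^ (k + 1) / (1 - β) := by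
    intro k
    induction k with
    | zero =>
      refine ⟨hx, ?_⟩
      simpa [resid, pow_one] using hx2
    | succ k ih =>
      obtain ⟨hpos, hub⟩ := ih
      have hbk : (0:ℝ) < β ^ (k + 1) := by positivity
      set r := resid m β x k with hrdef
      set y := r / β ^ (k + 1) with hydef
      have hy0 : 0 < y := div_pos hpos hbk
      have hceil : 1 ≤ ⌈y⌉₊ := Nat.ceil_pos.mpr hy0
      have hyr : y * β ^ (k + 1) = r := div_mul_cancel₀ r (ne_of_gt hbk)
      have hcast : ((⌈y⌉₊ - 1 : ℕ) : ℝ) = (⌈y⌉₊ : ℝ) - 1 := by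
        push_cast [Nat.cast_sub hceil]; ring
      have hdlt : (qdig m β x k : ℝ) < y := by
        have h2 : (⌈y⌉₊ : ℝ) < y + 1 := Nat.ceil_lt_add_one hy0.le
        have h3 : ((qdig m β x k : ℕ) : ℝ) ≤ ((⌈y⌉₊ - 1 : ℕ) : ℝ) := by
          exact_mod_cast min_le_right (m - 1) (⌈y⌉₊ - 1)
        rw [hcast] at h3; linarith
      have hpos' : 0 < resid m β x (k + 1) := by
        rw [resid_succ]
        have := mul_lt_mul_of_pos_right hdlt hbk
        rw [hyr] at this
        linarith
      refine ⟨hpos', ?_⟩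
      by_cases hcase : m - 1 ≤ ⌈y⌉₊ - 1
      · have hd : qdig m β x k = m - 1 := min_eq_left hcase
        rw [resid_succ, hd, hm1]
        have heq : ((m : ℝ) - 1) * β ^ (k + 1) / (1 - β) - ((m : ℝ) - 1) * β ^ (k + 1)
            = ((m : ℝ) - 1) * β ^ (k + 1 + 1) / (1 - β) := by
          field_simp; ring
        linarith
      · push_neg at hcase
        have hd : qdig m β x k = ⌈y⌉₊ - 1 := min_eq_right hcase.le
        have hyle : y ≤ (⌈y⌉₊ : ℝ) := Nat.le_ceil y
        have hd1 : y - (qdig m β x k : ℝ) ≤ 1 := by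
          rw [hd, hcast]; linarith
        have h4 : resid m β x (k + 1) ≤ β ^ (k + 1) := by
          rw [resid_succ]
          have := mul_le_mul_of_nonneg_right hd1 hbk.le
          rw [sub_mul, hyr, one_mul] at this
          linarith
        have h5 : β ^ (k + 1) ≤ ((m : ℝ) - 1) * β ^ (k + 1 + 1) / (1 - β) := by
          rw [le_div_iff₀ h1β]
          have h6 : (1 - β) ≤ ((m : ℝ) - 1) * β := by nlinarith
          calc β ^ (k + 1) * (1 - β) ≤ β ^ (k + 1) * (((m : ℝ) - 1) * β) := by
                exact mul_le_mul_of_nonneg_left h6 hbk.le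
            _ = ((m : ℝ) - 1) * β ^ (k + 1 + 1) := by ring
        linarith
  -- digits bounded
  have hdig : ∀ n, qdig m β x n < m := fun n =>
    lt_of_le_of_lt (min_le_left _ _) (by omega)
  -- partial sums
  have hpart : ∀ k, ∑ j ∈ range k, (qdig m β x j : ℝ) * β ^ (j + 1) = x - resid m β x k := by
    intro k
    induction k with
    | zero => simp [resid]
    | succ k ih => rw [sum_range_succ, ih, resid_succ]; ring
  -- resid tends to 0
  have hC : ∀ k, resid m β x k ≤ (((m : ℝ) - 1) * β / (1 - β)) * β ^ k := by
    intro k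
    have := (inv k).2
    calc resid m β x k ≤ ((m : ℝ) - 1) * β ^ (k + 1) / (1 - β) := this
      _ = (((m : ℝ) - 1) * β / (1 - β)) * β ^ k := by field_simp; ring
  have htend : Tendsto (fun k => resid m β x k) atTop (nhds 0) := by
    apply squeeze_zero (fun k => (inv k).1.le) hC
    have := (tendsto_pow_atTop_nhds_zero_of_lt_one h0.le h1).const_mul
      (((m : ℝ) - 1) * β / (1 - β))
    simpa using this
  -- summability and tsum
  have hsum : Summable (fun n => (qdig m β x n : ℝ) * β ^ (n + 1)) :=
    summable_digits h0 h1 _ hdig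
  have hts : Tendsto (fun k => ∑ j ∈ range k, (qdig m β x j : ℝ) * β ^ (j + 1)) atTop
      (nhds (∑' n, (qdig m β x n : ℝ) * β ^ (n + 1))) := hsum.hasSum.tendsto_sum_nat
  have hts2 : Tendsto (fun k => ∑ j ∈ range k, (qdig m β x j : ℝ) * β ^ (j + 1)) atTop
      (nhds x) := by
    have : Tendsto (fun k => x - resid m β x k) atTop (nhds (x - 0)) :=
      tendsto_const_nhds.sub htend
    rw [sub_zero] at this
    simpa only [hpart] using this
  have htsum : (∑' n, (qdig m β x n : ℝ) * β ^ (n + 1)) = x := tendsto_nhds_unique hts hts2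
  refine ⟨qdig m β x, hdig, htsum, ?_⟩
  -- infinitely many nonzero digits
  intro n
  by_contra hcon
  push_neg at hcon
  have hconst : ∀ j, resid m β x (n + j) = resid m β x n := by
    intro j
    induction j with
    | zero => rfl
    | succ j ih =>
      rw [show n + (j + 1) = (n + j) + 1 from rfl, resid_succ, hcon (n + j) (by omega), ih]
      simp
  obtain ⟨k, hk1, hk2⟩ :=
    ((htend.eventually_lt_const (inv n).1).and (eventually_ge_atTop n)).exists
  have := hconst (k - n)
  rw [Nat.add_sub_cancel' hk2] at this
  rw [this] at hk1
  exact lt_irrefl _ hk1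

/-- the quasi-greedy expansion of 1 is strictly decreasing in β. -/
theorem stmt9 (m : ℕ) (hm : 2 ≤ m) (β β' : ℝ)
    (hβ : 1 / (m : ℝ) < β) (hββ' : β < β') (hβ' : β' < 1)
    (δ δ' : ℕ → ℕ)
    (hδ : IsQuasiGreedy m β δ) (hδ' : IsQuasiGreedy m β' δ') :
    LexLt δ' δ := by
  have hm0 : (0:ℝ) < m := by positivity
  have hβ0 : 0 < β := lt_trans (by positivity) hβ
  have hβ1 : β < 1 := hββ'.trans hβ'
  have hβ'0 : 0 < β' := hβ0.trans hββ'
  have h1β : (0:ℝ) < 1 - β := by linarith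
  have hmβ : 1 < (m : ℝ) * β := by
    rw [div_lt_iff₀ hm0] at hβ; linarith
  obtain ⟨⟨hδd, hδsum⟩, hδinf, hδmax⟩ := hδ
  obtain ⟨⟨hδ'd, hδ'sum⟩, hδ'inf, -⟩ := hδ'
  have hSδ : Summable (fun n => (δ n : ℝ) * β ^ (n + 1)) := summable_digits hβ0 hβ1 δ hδd
  have hSδ' : Summable (fun n => (δ' n : ℝ) * β ^ (n + 1)) := summable_digits hβ0 hβ1 δ' hδ'd
  have hSδ'' : Summable (fun n => (δ' n : ℝ) * β' ^ (n + 1)) := summable_digits hβ'0 hβ' δ' hδ'd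
  -- s := sum of δ' in base β is < 1
  have hslt : (∑' n, (δ' n : ℝ) * β ^ (n + 1)) < 1 := by
    obtain ⟨k, -, hkne⟩ := hδ'inf 0
    have hlt : (∑' n, (δ' n : ℝ) * β ^ (n + 1)) < ∑' n, (δ' n : ℝ) * β' ^ (n + 1) := by
      apply Summable.tsum_lt_tsum (i := k) ?_ ?_ hSδ' hSδ''
      · intro n
        exact mul_le_mul_of_nonneg_left (pow_le_pow_left₀ hβ0.le hββ'.le (n + 1))
          (Nat.cast_nonneg _)
      · have hk1 : (1:ℝ) ≤ (δ' k : ℝ) := by exact_mod_cast Nat.one_le_iff_ne_zero.mpr hkne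
        have : β ^ (k + 1) < β' ^ (k + 1) := pow_lt_pow_left₀ hββ' hβ0.le (by omega)
        have hd0 : (0:ℝ) < (δ' k : ℝ) := by linarith
        exact mul_lt_mul_of_pos_left this hd0
    rw [hδ'sum] at hlt
    exact hlt
  rcases lex_total δ' δ with h | h | h
  · exact h
  · exfalso; rw [h, hδsum] at hslt; exact lt_irrefl _ hslt
  · exfalso
    obtain ⟨n, hpre, hlt⟩ := h
    set P : ℝ := ∑ k ∈ range n, (δ k : ℝ) * β ^ (k + 1) with hPdef
    have hm1 : ((m - 1 : ℕ) : ℝ) = (m : ℝ) - 1 := by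
      have h1m : 1 ≤ m := by omega
      push_cast [Nat.cast_sub h1m]; ring
    -- key1 : P + (δ n + 1) β^{n+1} ≤ s < 1
    have hP' : P = ∑ k ∈ range n, (δ' k : ℝ) * β ^ (k + 1) := by
      apply sum_congr rfl
      intro k hk
      rw [hpre k (mem_range.mp hk)]
    have key1 : P + ((δ n : ℝ) + 1) * β ^ (n + 1) < 1 := by
      have h2 : ((δ n : ℝ) + 1) ≤ (δ' n : ℝ) := by exact_mod_cast hlt
      have h3 : P + ((δ n : ℝ) + 1) * β ^ (n + 1)
          ≤ ∑ k ∈ range (n + 1), (δ' k : ℝ) * β ^ (k + 1) := by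
        rw [sum_range_succ, ← hP']
        have := mul_le_mul_of_nonneg_right h2 (le_of_lt (pow_pos hβ0 (n + 1)))
        linarith
      have h4 : ∑ k ∈ range (n + 1), (δ' k : ℝ) * β ^ (k + 1)
          ≤ ∑' k, (δ' k : ℝ) * β ^ (k + 1) :=
        Summable.sum_le_tsum _ (fun i _ => by positivity) hSδ'
      linarith
    set r : ℝ := 1 - P - ((δ n : ℝ) + 1) * β ^ (n + 1) with hrdef
    have hr0 : 0 < r := by rw [hrdef]; linarith
    -- key2 : r ≤ (m-1) β^{n+2} / (1-β)
    have hsplit : ∑ i ∈ range (n + 1), (δ i : ℝ) * β ^ (i + 1)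
        + ∑' i : ℕ, (δ (i + (n + 1)) : ℝ) * β ^ (i + (n + 1) + 1) = 1 := by
      rw [Summable.sum_add_tsum_nat_add (n + 1) hSδ]; exact hδsum
    have htail : ∑' i : ℕ, (δ (i + (n + 1)) : ℝ) * β ^ (i + (n + 1) + 1)
        ≤ ((m : ℝ) - 1) * β ^ (n + 2) / (1 - β) := by
      have := tail_le hβ0 hβ1 δ hδd (n + 1)
      simpa using this
    have key2 : r ≤ ((m : ℝ) - 1) * β ^ (n + 2) / (1 - β) := by
      have h5 : ∑ i ∈ range (n + 1), (δ i : ℝ) * β ^ (i + 1)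
          = P + (δ n : ℝ) * β ^ (n + 1) := by rw [sum_range_succ]
      have h6 : r = (∑' i : ℕ, (δ (i + (n + 1)) : ℝ) * β ^ (i + (n + 1) + 1)) - β ^ (n + 1) := by
        rw [hrdef]
        have := hsplit
        rw [h5] at this
        linarith
      have hb : (0:ℝ) < β ^ (n + 1) := pow_pos hβ0 _
      linarith
    -- build the competitor expansion e
    set x : ℝ := r / β ^ (n + 1) with hxdef
    have hbn : (0:ℝ) < β ^ (n + 1) := pow_pos hβ0 _
    have hx0 : 0 < x := div_pos hr0 hbn
    have hx2 : x ≤ ((m : ℝ) - 1) * β / (1 - β) := by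
      rw [hxdef, div_le_iff₀ hbn]
      calc r ≤ ((m : ℝ) - 1) * β ^ (n + 2) / (1 - β) := key2
        _ = ((m : ℝ) - 1) * β / (1 - β) * β ^ (n + 1) := by field_simp; ring
    obtain ⟨f, hfm, hfsum, hfinf⟩ := exists_expansion m hm hβ0 hβ1 hmβ hx0 hx2
    classical
    set e : ℕ → ℕ := fun k => if k < n then δ k else if k = n then δ n + 1 else f (k - (n + 1))
      with hedef
    have he_lt : ∀ k, k < n → e k = δ k := fun k hk => by simp [hedef, hk]
    have he_n : e n = δ n + 1 := by simp [hedef]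
    have he_tail : ∀ i : ℕ, e (i + (n + 1)) = f i := by
      intro i
      have h7 : ¬ (i + (n + 1) < n) := by omega
      have h8 : ¬ (i + (n + 1) = n) := by omega
      simp [hedef, h7, h8]
    have hem : ∀ k, e k < m := by
      intro k
      rcases lt_trichotomy k n with hk | hk | hk
      · rw [he_lt k hk]; exact hδd k
      · subst hk; rw [he_n]
        have := hδ'd k; omega
      · have h7 : ¬ (k < n) := by omega
        have h8 : ¬ (k = n) := by omega
        simp only [hedef, h7, h8, if_false]
        exact hfm _
    have hesum : (∑' k, (e k : ℝ) * β ^ (k + 1)) = 1 := by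
      have hSe : Summable (fun k => (e k : ℝ) * β ^ (k + 1)) := summable_digits hβ0 hβ1 e hem
      rw [← Summable.sum_add_tsum_nat_add (n + 1) hSe]
      have h9 : ∑ i ∈ range (n + 1), (e i : ℝ) * β ^ (i + 1)
          = P + ((δ n : ℝ) + 1) * β ^ (n + 1) := by
        rw [sum_range_succ, he_n]
        congr 1
        · apply sum_congr rfl
          intro k hk
          rw [he_lt k (mem_range.mp hk)]
        · push_cast; ring
      have h10 : ∑' i : ℕ, (e (i + (n + 1)) : ℝ) * β ^ (i + (n + 1) + 1) = r := by
        have h11 : ∀ i : ℕ, (e (i + (n + 1)) : ℝ) * β ^ (i + (n + 1) + 1)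
            = β ^ (n + 1) * ((f i : ℝ) * β ^ (i + 1)) := by
          intro i
          rw [he_tail i]; ring
        calc ∑' i : ℕ, (e (i + (n + 1)) : ℝ) * β ^ (i + (n + 1) + 1)
            = ∑' i : ℕ, β ^ (n + 1) * ((f i : ℝ) * β ^ (i + 1)) := by
              exact tsum_congr h11
          _ = β ^ (n + 1) * x := by rw [tsum_mul_left, hfsum]
          _ = r := by rw [hxdef]; field_simp
      rw [h9, h10, hrdef]; ring
    have heinf : IsInfiniteExp e := by
      intro j
      obtain ⟨k, hk1, hk2⟩ := hfinf j
      refine ⟨k + (n + 1), by omega, ?_⟩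
      rw [he_tail k]; exact hk2
    have hlex : LexLt δ e := ⟨n, fun k hk => (he_lt k hk).symm, by rw [he_n]; omega⟩
    have hle : LexLe e δ := hδmax e ⟨hem, hesum⟩ heinf
    rcases hle with he | he
    · obtain ⟨k, -, hk⟩ := hlex
      rw [he] at hk
      exact lt_irrefl _ hk
    · exact lexlt_asymm hlex he
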